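/- arXiv:2303.11566 — 2 statements merged into one kernel-verified Lean document; each statement's English description precedes it below -/
import Mathlib

section
/- Let ρ0 and ρ1 be density matrices on ℂ^n, let τ ≥ 0, let A = ρ1 − τ·ρ0, and let P* be the orthogonal projection onto the span of the eigenvectors of A with strictly positive eigenvalues. Set x* = Tr(P*·ρ0), y* = Tr(P*·ρ1) (false alarm and detection rates of P*). Then for every measurement operator P' with 0 ≤ P' ≤ I, writing x' = Tr(P'·ρ0) and y' = Tr(P'·ρ1), the Neyman–Pearson-type inequality τ·(x* − x') ≤ y* − y' holds. -/
open Matrix ComplexOrder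

/-- A density matrix on ℂ^n: Hermitian, positive semidefinite, trace 1. -/
def Matrix.IsDensityMatrix {n : ℕ} (ρ : Matrix (Fin n) (Fin n) ℂ) : Prop :=
  ρ.IsHermitian ∧ ρ.PosSemidef ∧ ρ.trace = 1

/-- A measurement operator: Hermitian `P` with `0 ≤ P ≤ I`, i.e. both `P` and
`1 - P` are positive semidefinite. -/
def Matrix.IsMeasurement {n : ℕ} (P : Matrix (Fin n) (Fin n) ℂ) : Prop :=
  P.IsHermitian ∧ P.PosSemidef ∧ (1 - P).PosSemidef

/-- The orthogonal projection onto the span of the eigenvectors of a Hermitian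
matrix `A` with strictly positive eigenvalues,
`P* = Σ_{η_j > 0} |η_j⟩⟨η_j|` in terms of a spectral decomposition of `A`. -/
noncomputable def Matrix.IsHermitian.posEigenProj {n : ℕ}
    {A : Matrix (Fin n) (Fin n) ℂ} (hA : A.IsHermitian) : Matrix (Fin n) (Fin n) ℂ :=
  (hA.eigenvectorUnitary : Matrix (Fin n) (Fin n) ℂ) *
    Matrix.diagonal (fun j => if 0 < hA.eigenvalues j then (1 : ℂ) else 0) *
    star (hA.eigenvectorUnitary : Matrix (Fin n) (Fin n) ℂ)
lemma posSemidef_diag_nonneg {n : ℕ} {M : Matrix (Fin n) (Fin n) ℂ}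
    (hM : M.PosSemidef) (j : Fin n) : 0 ≤ M j j := by
  exact hM.diag_nonneg

lemma trace_mul_spectral {n : ℕ} {A : Matrix (Fin n) (Fin n) ℂ} (hA : A.IsHermitian)
    (P : Matrix (Fin n) (Fin n) ℂ) :
    (P * A).trace =
      ∑ j, (star (hA.eigenvectorUnitary : Matrix (Fin n) (Fin n) ℂ) * P *
        (hA.eigenvectorUnitary : Matrix (Fin n) (Fin n) ℂ)) j j * (hA.eigenvalues j : ℂ) := by
  set U := (hA.eigenvectorUnitary : Matrix (Fin n) (Fin n) ℂ)
  conv_lhs => rw [hA.spectral_theorem, Unitary.conjStarAlgAut_apply]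
  rw [show P * (U * diagonal (RCLike.ofReal ∘ hA.eigenvalues) * star U)
      = (P * U) * diagonal (RCLike.ofReal ∘ hA.eigenvalues) * star U by
        simp only [mul_assoc],
    trace_mul_cycle, ← mul_assoc, trace]
  simp [mul_diagonal, diag, Function.comp, mul_comm]

/-- Neyman–Pearson-type inequality: with `x* = Tr(P*·ρ0)`,
`y* = Tr(P*·ρ1)` the false alarm/detection rates of the positive-eigenspace
projection `P*` of `A = ρ1 - τ • ρ0`, every measurement `P'` with rates
`x' = Tr(P'·ρ0)`, `y' = Tr(P'·ρ1)` satisfies `τ·(x* - x') ≤ y* - y'`. -/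
theorem neyman_pearson_type_inequality {n : ℕ} (ρ0 ρ1 : Matrix (Fin n) (Fin n) ℂ)
    (hρ0 : ρ0.IsDensityMatrix) (hρ1 : ρ1.IsDensityMatrix) (τ : ℝ) (hτ : 0 ≤ τ)
    {A : Matrix (Fin n) (Fin n) ℂ} (hAdef : A = ρ1 - (τ : ℂ) • ρ0) (hA : A.IsHermitian)
    (P' : Matrix (Fin n) (Fin n) ℂ) (hP' : P'.IsMeasurement) :
    (τ : ℂ) * ((hA.posEigenProj * ρ0).trace - (P' * ρ0).trace) ≤
      (hA.posEigenProj * ρ1).trace - (P' * ρ1).trace := by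
  set U := (hA.eigenvectorUnitary : Matrix (Fin n) (Fin n) ℂ) with hU
  have hUU : star U * U = 1 := (Matrix.mem_unitaryGroup_iff').mp hA.eigenvectorUnitary.2
  -- key inequality: Tr(P' A) ≤ Tr(P* A)
  have key : (P' * A).trace ≤ (hA.posEigenProj * A).trace := by
    rw [trace_mul_spectral hA, trace_mul_spectral hA]
    apply Finset.sum_le_sum
    intro j _
    set Q := star U * P' * U with hQ
    have hQpsd : Q.PosSemidef := by
      simpa [hQ, mul_assoc, star_star, Matrix.star_eq_conjTranspose] using hP'.2.1.conjTranspose_mul_mul_same U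
    have hQ0 : 0 ≤ Q j j := posSemidef_diag_nonneg hQpsd j
    have hQ1 : Q j j ≤ 1 := by
      have h1 : (star U * (1 - P') * U).PosSemidef := by
        simpa [mul_assoc, star_star, Matrix.star_eq_conjTranspose] using hP'.2.2.conjTranspose_mul_mul_same U
      have := posSemidef_diag_nonneg h1 j
      have he : (star U * (1 - P') * U) j j = 1 - Q j j := by
        have : star U * (1 - P') * U = 1 - Q := by
          rw [mul_sub, sub_mul, mul_one, hUU, hQ]
        rw [this, Matrix.sub_apply, Matrix.one_apply_eq]
      rw [he] at this
      exact sub_nonneg.mp this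
    have hR : star U * hA.posEigenProj * U
        = diagonal (fun j => if 0 < hA.eigenvalues j then (1 : ℂ) else 0) := by
      rw [Matrix.IsHermitian.posEigenProj]
      simp only [mul_assoc]
      rw [hUU, mul_one, ← mul_assoc, hUU, one_mul]
    rw [hR, diagonal_apply_eq]
    by_cases hj : 0 < hA.eigenvalues j
    · rw [if_pos hj]
      exact mul_le_mul_of_nonneg_right hQ1 (Complex.zero_le_real.mpr hj.le)
    · rw [if_neg hj]
      rw [zero_mul]
      exact mul_nonpos_of_nonneg_of_nonpos hQ0
        (by exact_mod_cast (not_lt.mp hj))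
  -- rearrange
  have expand : ∀ P : Matrix (Fin n) (Fin n) ℂ,
      (P * A).trace = (P * ρ1).trace - (τ : ℂ) * (P * ρ0).trace := by
    intro P
    rw [hAdef, mul_sub, trace_sub, Matrix.mul_smul, trace_smul, smul_eq_mul]
  rw [expand, expand] at key
  rw [mul_sub, sub_le_sub_iff]
  rw [sub_le_sub_iff] at key
  calc (τ:ℂ) * (hA.posEigenProj * ρ0).trace + (P' * ρ1).trace
      = (P' * ρ1).trace + (τ:ℂ) * (hA.posEigenProj * ρ0).trace := by ring
    _ ≤ (hA.posEigenProj * ρ1).trace + (τ:ℂ) * (P' * ρ0).trace := key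
    _ = (hA.posEigenProj * ρ1).trace + (τ:ℂ) * (P' * ρ0).trace := rfl
end

section
/- Let ρ0 and ρ1 be density matrices on ℂ^n, let τ > 0, let A = ρ1 − τ·ρ0, and let P* be the orthogonal projection onto the span of the eigenvectors of A with strictly positive eigenvalues. Then for every measurement operator P' with 0 ≤ P' ≤ I whose detection rate equals that of P*, i.e., Tr(P'·ρ1) = Tr(P*·ρ1), the false alarm rate of P* is no larger: Tr(P*·ρ0) ≤ Tr(P'·ρ0). That is, among all measurements achieving the same detection rate, the quantum likelihood-ratio test achieves the minimal false alarm rate. -/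
open Matrix ComplexOrder

lemma psd_diag_nonneg {n : ℕ} {M : Matrix (Fin n) (Fin n) ℂ} (h : M.PosSemidef) (i : Fin n) :
    0 ≤ M i i := by
  exact h.diag_nonneg

lemma trace_mul_diag {n : ℕ} (M : Matrix (Fin n) (Fin n) ℂ) (d : Fin n → ℂ) :
    (M * Matrix.diagonal d).trace = ∑ j, M j j * d j := by
  simp [Matrix.trace, Matrix.mul_diagonal, Matrix.diag]

/-- Key: a measurement's trace against `A` is at most that of the positive-eigenspace
projection. -/
lemma key_trace_le {n : ℕ} {A : Matrix (Fin n) (Fin n) ℂ} (hA : A.IsHermitian)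
    (P : Matrix (Fin n) (Fin n) ℂ) (hP : P.PosSemidef) (hP1 : (1 - P).PosSemidef) :
    (P * A).trace ≤ (hA.posEigenProj * A).trace := by
  set U : Matrix (Fin n) (Fin n) ℂ := (hA.eigenvectorUnitary : Matrix (Fin n) (Fin n) ℂ) with hU
  have hsU : star U * U = 1 := Matrix.mem_unitaryGroup_iff'.mp hA.eigenvectorUnitary.2
  have hUs : U * star U = 1 := Matrix.mem_unitaryGroup_iff.mp hA.eigenvectorUnitary.2
  set d : Fin n → ℝ := hA.eigenvalues with hd
  -- trace of Q * A in terms of conjugated diagonal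
  have htr : ∀ Q : Matrix (Fin n) (Fin n) ℂ,
      (Q * A).trace = ∑ j, (star U * Q * U) j j * (d j : ℂ) := by
    intro Q
    conv_lhs => rw [hA.spectral_theorem, Unitary.conjStarAlgAut_apply]
    rw [show Q * (U * Matrix.diagonal (RCLike.ofReal ∘ d) * star U)
        = (Q * U * Matrix.diagonal (RCLike.ofReal ∘ d)) * star U by noncomm_ring,
      Matrix.trace_mul_comm,
      show star U * (Q * U * Matrix.diagonal (RCLike.ofReal ∘ d))
        = (star U * Q * U) * Matrix.diagonal (RCLike.ofReal ∘ d) by noncomm_ring,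
      trace_mul_diag]
    rfl
  rw [htr P, htr hA.posEigenProj]
  have hconj : star U * hA.posEigenProj * U
      = Matrix.diagonal (fun j => if 0 < d j then (1 : ℂ) else 0) := by
    rw [Matrix.IsHermitian.posEigenProj]
    rw [show star U * (U * Matrix.diagonal (fun j => if 0 < d j then (1:ℂ) else 0) * star U) * U
        = (star U * U) * Matrix.diagonal (fun j => if 0 < d j then (1:ℂ) else 0) * (star U * U)
        by noncomm_ring, hsU, one_mul, mul_one]
  rw [hconj]
  apply Finset.sum_le_sum
  intro j _
  have hc0 : 0 ≤ (star U * P * U) j j := by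
    have := hP.conjTranspose_mul_mul_same U
    exact psd_diag_nonneg (by simpa [Matrix.star_eq_conjTranspose] using this) j
  have hc1 : (star U * P * U) j j ≤ 1 := by
    have h2 := hP1.conjTranspose_mul_mul_same U
    have h3 : 0 ≤ (star U * (1 - P) * U) j j :=
      psd_diag_nonneg (by simpa [Matrix.star_eq_conjTranspose] using h2) j
    have h4 : star U * (1 - P) * U = 1 - star U * P * U := by
      rw [show star U * (1 - P) * U = star U * U - star U * P * U by noncomm_ring, hsU]
    rw [h4] at h3
    simpa [Matrix.sub_apply, Matrix.one_apply] using sub_nonneg.mp (by simpa using h3)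
  simp only [Matrix.diagonal_apply_eq]
  by_cases hdj : 0 < d j
  · rw [if_pos hdj]
    simpa using mul_le_mul_of_nonneg_right hc1 (show (0:ℂ) ≤ (d j : ℂ) by exact_mod_cast hdj.le)
  · rw [if_neg hdj]
    rw [zero_mul]
    have : (d j : ℂ) ≤ 0 := by exact_mod_cast not_lt.mp hdj
    simpa using mul_le_mul_of_nonneg_left this hc0

/-- Among all measurements achieving the same detection rate as the
quantum likelihood-ratio projection `P*` (positive-eigenspace projection of
`A = ρ1 - τ • ρ0`, `τ > 0`), `P*` achieves the minimal false alarm rate. -/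
theorem qlrt_minimal_false_alarm {n : ℕ} (ρ0 ρ1 : Matrix (Fin n) (Fin n) ℂ)
    (hρ0 : ρ0.IsDensityMatrix) (hρ1 : ρ1.IsDensityMatrix) (τ : ℝ) (hτ : 0 < τ)
    {A : Matrix (Fin n) (Fin n) ℂ} (hAdef : A = ρ1 - (τ : ℂ) • ρ0) (hA : A.IsHermitian)
    (P' : Matrix (Fin n) (Fin n) ℂ) (hP' : P'.IsMeasurement)
    (hdet : (P' * ρ1).trace = (hA.posEigenProj * ρ1).trace) :
    (hA.posEigenProj * ρ0).trace ≤ (P' * ρ0).trace := by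
  have key := key_trace_le hA P' hP'.2.1 hP'.2.2
  have expand : ∀ Q : Matrix (Fin n) (Fin n) ℂ,
      (Q * A).trace = (Q * ρ1).trace - (τ : ℂ) * (Q * ρ0).trace := by
    intro Q
    rw [hAdef, Matrix.mul_sub, Matrix.trace_sub, Matrix.mul_smul, Matrix.trace_smul]
    rfl
  rw [expand, expand, hdet] at key
  have h2 : (τ : ℂ) * (hA.posEigenProj * ρ0).trace ≤ (τ : ℂ) * (P' * ρ0).trace :=
    (sub_le_sub_iff_left _).mp key
  have hinv : (0 : ℂ) ≤ ((τ : ℂ))⁻¹ := by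
    rw [← Complex.ofReal_inv]
    exact_mod_cast (inv_nonneg.mpr hτ.le)
  have hne : (τ : ℂ) ≠ 0 := by exact_mod_cast hτ.ne'
  have := mul_le_mul_of_nonneg_left h2 hinv
  rwa [← mul_assoc, inv_mul_cancel₀ hne, one_mul, ← mul_assoc, inv_mul_cancel₀ hne, one_mul]
    at this
end
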